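/- For every integer k ≥ 3, the modified instance I_k(1) in which every commodity has unit demand (d_i = 1 for all i = 0,…,k−1) admits a multi-commodity flow over time without intermediate storage with time horizon T = k. Concretely, sending flow of each commodity i at rate 1 into arc a_{(i+m) mod k} during the time interval [m, m+1) for m = 0,…,k−2 (and rate 0 otherwise) is feasible with horizon k. -/

import Mathlib

open MeasureTheory Set

/-- A multi-commodity flow over time with time horizon `T` for the cycle instance with `k` nodes
`v_0, …, v_{k-1}`, arcs `a_j = (v_j, v_{(j+1) % k})` of unit capacity and unit transit time,
`k` commodities where commodity `i` has source `v_i`, sink `v_{(i-1) % k}` and demand `d i`.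
`f i j` is the flow rate function of commodity `i` into arc `a_j`. -/
def IsMCFlow (k : ℕ) (T : ℝ) (d : ℕ → ℝ) (f : ℕ → ℕ → ℝ → ℝ) : Prop :=
  -- positive time horizon
  0 < T ∧
  -- integrable flow rate functions
  (∀ i < k, ∀ j < k, Integrable (f i j)) ∧
  -- nonnegative flow rates
  (∀ i < k, ∀ j < k, ∀ θ : ℝ, 0 ≤ f i j θ) ∧
  -- flow rates vanish outside [0, T)
  (∀ i < k, ∀ j < k, ∀ θ : ℝ, θ ∉ Ico (0 : ℝ) T → f i j θ = 0) ∧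
  -- capacity constraints, for almost every time
  (∀ j < k, ∀ᵐ θ : ℝ, ∑ i ∈ Finset.range k, f i j θ ≤ 1) ∧
  -- weak flow conservation: flow can only emerge from the source `v_i` of commodity `i`;
  -- node `v_m` has unique incoming arc `a_{(m-1) % k}` and unique outgoing arc `a_m`
  (∀ i < k, ∀ m < k, m ≠ i → ∀ θ ∈ Ico (0 : ℝ) T,
    0 ≤ (∫ ξ in (0 : ℝ)..(θ - 1), f i ((m + k - 1) % k) ξ) -
        ∫ ξ in (0 : ℝ)..θ, f i m ξ) ∧
  -- demands are fulfilled at time `T`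
  (∀ i < k, ∀ m < k,
    (∫ ξ in (0 : ℝ)..(T - 1), f i ((m + k - 1) % k) ξ) -
        (∫ ξ in (0 : ℝ)..T, f i m ξ) =
      if m = (i + k - 1) % k then d i
      else if m = i then -d i
      else 0)

/-- The flow is without intermediate storage: flow conservation holds with equality at every
node other than the source `v_i` and the sink `v_{(i-1) % k}` of each commodity `i`. -/
def NoStorage (k : ℕ) (T : ℝ) (f : ℕ → ℕ → ℝ → ℝ) : Prop :=
  ∀ i < k, ∀ m < k, m ≠ i → m ≠ (i + k - 1) % k → ∀ θ ∈ Ico (0 : ℝ) T,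
    (∫ ξ in (0 : ℝ)..(θ - 1), f i ((m + k - 1) % k) ξ) =
      ∫ ξ in (0 : ℝ)..θ, f i m ξ

/-- The demands of the instance `I_k`: commodity `0` has demand `2`,
all other commodities have demand `1`. -/
noncomputable def demandI (i : ℕ) : ℝ := if i = 0 then 2 else 1

open Classical in
/-- The explicit flow for the unit-demand instance `I_k(1)`: commodity `i` sends flow at
rate `1` into arc `a_{(i+m) % k}` during the time interval `[m, m + 1)` for
`m = 0, …, k - 2`, and at rate `0` otherwise. -/
noncomputable def flowUnit (k i j : ℕ) (θ : ℝ) : ℝ :=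
  if ∃ m : ℕ, m < k - 1 ∧ j = (i + m) % k ∧ (m : ℝ) ≤ θ ∧ θ < (m : ℝ) + 1 then 1 else 0

/- ---------- auxiliary lemmas ---------- -/

/-- Explicit description of `a % k` when `a < 2k`. -/
lemma modc' (k a : ℕ) (h : a < 2*k) :
    (a < k ∧ a % k = a) ∨ (k ≤ a ∧ a % k = a - k) := by
  rcases lt_or_ge a k with h1 | h1
  · exact Or.inl ⟨h1, Nat.mod_eq_of_lt h1⟩
  · exact Or.inr ⟨h1, by rw [Nat.mod_eq_sub_mod h1, Nat.mod_eq_of_lt (by omega)]⟩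

/-- Integral of the indicator of `[r, r+1)` from `0` to `θ`. -/
lemma integral_box' (r : ℕ) (θ : ℝ) :
    ∫ ξ in (0:ℝ)..θ, (if (r:ℝ) ≤ ξ ∧ ξ < (r:ℝ)+1 then (1:ℝ) else 0) =
      min (max (θ - r) 0) 1 := by
  have hr0 : (0:ℝ) ≤ r := Nat.cast_nonneg r
  rcases le_total θ 0 with hθ | hθ
  · have h1 : ∫ ξ in θ..(0:ℝ), (if (r:ℝ) ≤ ξ ∧ ξ < (r:ℝ)+1 then (1:ℝ) else 0) = 0 := by
      rw [intervalIntegral.integral_of_le hθ, MeasureTheory.integral_Ioc_eq_integral_Ioo]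
      apply MeasureTheory.setIntegral_eq_zero_of_forall_eq_zero
      intro ξ hξ
      rw [Set.mem_Ioo] at hξ
      have : ¬ ((r:ℝ) ≤ ξ ∧ ξ < (r:ℝ)+1) := by
        rintro ⟨ha, hb⟩
        linarith [hξ.2]
      simp [this]
    rw [intervalIntegral.integral_symm, h1, neg_zero]
    have : max (θ - r) 0 = 0 := by
      apply max_eq_right; linarith
    rw [this]
    simp
  · have hind : (fun ξ : ℝ => if (r:ℝ) ≤ ξ ∧ ξ < (r:ℝ)+1 then (1:ℝ) else 0) =
        Set.indicator (Ico (r:ℝ) ((r:ℝ)+1)) (fun _ => (1:ℝ)) := by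
      funext ξ
      simp [Set.indicator_apply, Set.mem_Ico]
    rw [intervalIntegral.integral_of_le hθ, hind,
      MeasureTheory.setIntegral_indicator measurableSet_Ico, MeasureTheory.setIntegral_const]
    have hvol : volume (Ioc (0:ℝ) θ ∩ Ico (r:ℝ) ((r:ℝ)+1)) =
        ENNReal.ofReal (min θ ((r:ℝ)+1) - r) := by
      apply le_antisymm
      · calc volume (Ioc (0:ℝ) θ ∩ Ico (r:ℝ) ((r:ℝ)+1))
            ≤ volume (Icc (r:ℝ) (min θ ((r:ℝ)+1))) := by
              apply measure_mono
              rintro ξ ⟨h1, h2⟩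
              rw [Set.mem_Ioc] at h1; rw [Set.mem_Ico] at h2
              exact ⟨h2.1, le_min h1.2 (le_of_lt h2.2)⟩
          _ = ENNReal.ofReal (min θ ((r:ℝ)+1) - r) := Real.volume_Icc
      · calc ENNReal.ofReal (min θ ((r:ℝ)+1) - r)
            = volume (Ioo (r:ℝ) (min θ ((r:ℝ)+1))) := Real.volume_Ioo.symm
          _ ≤ volume (Ioc (0:ℝ) θ ∩ Ico (r:ℝ) ((r:ℝ)+1)) := by
              apply measure_mono
              rintro ξ hξ
              rw [Set.mem_Ioo] at hξ
              obtain ⟨h1, h2⟩ := hξ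
              have h3 := lt_of_lt_of_le h2 (min_le_left _ _)
              have h4 := lt_of_lt_of_le h2 (min_le_right _ _)
              exact ⟨Set.mem_Ioc.2 ⟨lt_of_le_of_lt hr0 h1, le_of_lt h3⟩,
                Set.mem_Ico.2 ⟨le_of_lt h1, h4⟩⟩
    rw [measureReal_def, hvol]
    rcases le_total θ (r:ℝ) with h | h
    · have h1 : min θ ((r:ℝ)+1) - r ≤ 0 := by
        have := min_le_left θ ((r:ℝ)+1); linarith
      rw [ENNReal.ofReal_eq_zero.2 h1]
      have : max (θ - r) 0 = 0 := max_eq_right (by linarith)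
      rw [this]; simp
    · rw [ENNReal.toReal_ofReal (by
        have := le_min h (by linarith : (r:ℝ) ≤ (r:ℝ)+1); linarith)]
      have hmax : max (θ - r) 0 = θ - r := max_eq_left (by linarith)
      rw [hmax]
      rcases le_total θ ((r:ℝ)+1) with h2 | h2
      · rw [min_eq_left h2, min_eq_left (by linarith)]; simp
      · rw [min_eq_right h2, min_eq_right (by linarith)]; norm_num

/-- Pointwise description of `flowUnit` as an indicator of a unit box. -/
lemma flowUnit_eq' (k i j : ℕ) (hi : i < k) (hj : j < k) (θ : ℝ) :
    flowUnit k i j θ =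
      if (j + k - i) % k < k - 1 ∧ (((j + k - i) % k : ℕ) : ℝ) ≤ θ ∧
          θ < (((j + k - i) % k : ℕ) : ℝ) + 1 then 1 else 0 := by
  unfold flowUnit
  apply if_congr _ rfl rfl
  constructor
  · rintro ⟨m, hm, hjm, h1, h2⟩
    have hmr : m = (j + k - i) % k := by
      subst hjm
      rcases modc' k (i + m) (by omega) with ⟨ha, hb⟩ | ⟨ha, hb⟩ <;>
        rcases modc' k ((i+m) % k + k - i) (by omega) with ⟨hc, hd⟩ | ⟨hc, hd⟩ <;> omega
    rw [← hmr]
    exact ⟨by omega, h1, h2⟩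
  · rintro ⟨hr, h1, h2⟩
    refine ⟨(j + k - i) % k, hr, ?_, h1, h2⟩
    rcases modc' k (j + k - i) (by omega) with ⟨ha, hb⟩ | ⟨ha, hb⟩ <;>
      rcases modc' k (i + (j + k - i) % k) (by omega) with ⟨hc, hd⟩ | ⟨hc, hd⟩ <;> omega

/-- The box function is integrable. -/
lemma integrable_box' (r : ℕ) :
    Integrable (fun θ : ℝ => if (r:ℝ) ≤ θ ∧ θ < (r:ℝ)+1 then (1:ℝ) else 0) := by
  have hind : (fun ξ : ℝ => if (r:ℝ) ≤ ξ ∧ ξ < (r:ℝ)+1 then (1:ℝ) else 0) =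
      Set.indicator (Ico (r:ℝ) ((r:ℝ)+1)) (fun _ => (1:ℝ)) := by
    funext ξ
    simp [Set.indicator_apply, Set.mem_Ico]
  rw [hind]
  rw [MeasureTheory.integrable_indicator_iff measurableSet_Ico]
  refine MeasureTheory.integrableOn_const ?_
  rw [Real.volume_Ico]
  exact ENNReal.ofReal_ne_top

/-- Closed form of the integral of `flowUnit` from `0` to `θ`. -/
lemma integral_flowUnit (k i j : ℕ) (hi : i < k) (hj : j < k) (θ : ℝ) :
    ∫ ξ in (0:ℝ)..θ, flowUnit k i j ξ =
      if (j + k - i) % k < k - 1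
      then min (max (θ - (((j + k - i) % k : ℕ) : ℝ)) 0) 1 else 0 := by
  simp only [flowUnit_eq' k i j hi hj]
  by_cases h : (j + k - i) % k < k - 1
  · simp only [h, true_and, if_pos h]
    exact integral_box' _ θ
  · simp only [h, false_and, if_neg h, if_false]
    simp

lemma minmax_eq_one {x : ℝ} (h : 1 ≤ x) : min (max x 0) 1 = 1 := by
  rw [max_eq_left (by linarith), min_eq_right h]

/-- For every `k ≥ 3`, the modified instance `I_k(1)` with unit demands for all commodities
admits a multi-commodity flow over time without intermediate storage with time horizon `k`;
concretely, the explicit flow `flowUnit k` is feasible with horizon `k` and uses no storage. -/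
theorem unit_demand_no_storage_horizon_k (k : ℕ) (hk : 3 ≤ k) :
    IsMCFlow k (k : ℝ) (fun _ => 1) (flowUnit k) ∧ NoStorage k (k : ℝ) (flowUnit k) := by
  have hk0 : 0 < k := by omega
  have hmlt : ∀ m : ℕ, (m + k - 1) % k < k := fun m => Nat.mod_lt _ hk0
  -- key mod facts
  have hsrc : ∀ i < k, (i + k - i) % k = 0 ∧ ((i + k - 1) % k + k - i) % k = k - 1 := by
    intro i hi
    constructor
    · have : i + k - i = k := by omega
      rw [this, Nat.mod_self]
    · rcases modc' k (i + k - 1) (by omega) with ⟨ha, hb⟩ | ⟨ha, hb⟩ <;>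
        rcases modc' k ((i + k - 1) % k + k - i) (by omega) with ⟨hc, hd⟩ | ⟨hc, hd⟩ <;> omega
  have hmid : ∀ i < k, ∀ m < k, m ≠ i →
      (1 ≤ (m + k - i) % k ∧ (m + k - i) % k ≤ k - 1 ∧
        ((m + k - 1) % k + k - i) % k = (m + k - i) % k - 1) := by
    intro i hi m hm hne
    rcases modc' k (m + k - i) (by omega) with ⟨ha, hb⟩ | ⟨ha, hb⟩ <;>
      rcases modc' k (m + k - 1) (by omega) with ⟨hc, hd⟩ | ⟨hc, hd⟩ <;>
        rcases modc' k ((m + k - 1) % k + k - i) (by omega) with ⟨he, hf⟩ | ⟨he, hf⟩ <;> omega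
  have hsink : ∀ i < k, ∀ m < k, (m = (i + k - 1) % k ↔ (m + k - i) % k = k - 1) := by
    intro i hi m hm
    rcases modc' k (i + k - 1) (by omega) with ⟨ha, hb⟩ | ⟨ha, hb⟩ <;>
      rcases modc' k (m + k - i) (by omega) with ⟨hc, hd⟩ | ⟨hc, hd⟩ <;> omega
  refine ⟨⟨?_, ?_, ?_, ?_, ?_, ?_, ?_⟩, ?_⟩
  · -- positive horizon
    exact_mod_cast hk0
  · -- integrability
    intro i hi j hj
    have heq : flowUnit k i j = fun θ =>
        if (j + k - i) % k < k - 1 ∧ (((j + k - i) % k : ℕ) : ℝ) ≤ θ ∧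
            θ < (((j + k - i) % k : ℕ) : ℝ) + 1 then 1 else 0 := by
      funext θ; exact flowUnit_eq' k i j hi hj θ
    rw [heq]
    by_cases h : (j + k - i) % k < k - 1
    · simp only [h, true_and]
      exact integrable_box' _
    · simp only [h, false_and, if_false]
      exact integrable_zero _ _ _
  · -- nonnegativity
    intro i hi j hj θ
    unfold flowUnit
    split <;> norm_num
  · -- vanishing outside [0, k)
    intro i hi j hj θ hθ
    unfold flowUnit
    rw [if_neg]
    rintro ⟨m, hm, _, h1, h2⟩
    apply hθ
    have hm2 : m + 2 ≤ k := by omega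
    have hm2' : (m:ℝ) + 2 ≤ (k:ℝ) := by exact_mod_cast hm2
    constructor
    · exact le_trans (Nat.cast_nonneg m) h1
    · linarith
  · -- capacity
    intro j hj
    apply Filter.Eventually.of_forall
    intro θ
    by_cases hex : ∃ i ∈ Finset.range k, flowUnit k i j θ ≠ 0
    · obtain ⟨i₀, hi₀m, hne⟩ := hex
      have hi₀ : i₀ < k := Finset.mem_range.1 hi₀m
      rw [flowUnit_eq' k i₀ j hi₀ hj] at hne
      have hcond : (j + k - i₀) % k < k - 1 ∧ (((j + k - i₀) % k : ℕ) : ℝ) ≤ θ ∧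
          θ < (((j + k - i₀) % k : ℕ) : ℝ) + 1 := by
        by_contra h; rw [if_neg h] at hne; exact hne rfl
      have hle : ∑ i ∈ Finset.range k, flowUnit k i j θ ≤
          ∑ i ∈ Finset.range k, (if i = i₀ then (1:ℝ) else 0) := by
        apply Finset.sum_le_sum
        intro i him
        have hi : i < k := Finset.mem_range.1 him
        by_cases hii : i = i₀
        · rw [if_pos hii, flowUnit_eq' k i j hi hj]
          split <;> norm_num
        · rw [if_neg hii, flowUnit_eq' k i j hi hj, if_neg]
          rintro ⟨ha, hb, hc⟩
          apply hii
          have h1 : (((j + k - i) % k : ℕ) : ℝ) < (((j + k - i₀) % k : ℕ) : ℝ) + 1 :=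
            lt_of_le_of_lt hb hcond.2.2
          have h2 : (((j + k - i₀) % k : ℕ) : ℝ) < (((j + k - i) % k : ℕ) : ℝ) + 1 :=
            lt_of_le_of_lt hcond.2.1 hc
          have h1' : (j + k - i) % k < (j + k - i₀) % k + 1 := by exact_mod_cast h1
          have h2' : (j + k - i₀) % k < (j + k - i) % k + 1 := by exact_mod_cast h2
          rcases modc' k (j + k - i) (by omega) with ⟨hu, hv⟩ | ⟨hu, hv⟩ <;>
            rcases modc' k (j + k - i₀) (by omega) with ⟨hw, hx⟩ | ⟨hw, hx⟩ <;> omega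
      refine le_trans hle ?_
      rw [Finset.sum_ite_eq' (Finset.range k) i₀ (fun _ => (1:ℝ)), if_pos hi₀m]
    · push_neg at hex
      rw [Finset.sum_eq_zero hex]
      norm_num
  · -- weak flow conservation
    intro i hi m hm hmi θ hθ
    rw [integral_flowUnit k i m hi hm, integral_flowUnit k i ((m + k - 1) % k) hi (hmlt m)]
    obtain ⟨hr1, hr2, hr3⟩ := hmid i hi m hm hmi
    set ro := (m + k - i) % k with hro
    have hri : ((m + k - 1) % k + k - i) % k = ro - 1 := hr3
    rw [hri, if_pos (by omega : ro - 1 < k - 1)]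
    have hcast : ((ro - 1 : ℕ) : ℝ) = (ro : ℝ) - 1 := by
      have : (ro - 1) + 1 = ro := by omega
      have := congrArg (fun n : ℕ => (n : ℝ)) this
      push_cast at this
      linarith
    have harg : θ - 1 - ((ro - 1 : ℕ) : ℝ) = θ - (ro : ℝ) := by rw [hcast]; ring
    rw [harg]
    by_cases h : ro < k - 1
    · rw [if_pos h]; simp
    · rw [if_neg h]
      have : (0:ℝ) ≤ min (max (θ - (ro:ℝ)) 0) 1 :=
        le_min (le_max_right _ _) zero_le_one
      linarith
  · -- demands
    intro i hi m hm
    rw [integral_flowUnit k i m hi hm, integral_flowUnit k i ((m + k - 1) % k) hi (hmlt m)]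
    by_cases hmi : m = i
    · subst hmi
      obtain ⟨ha, hb⟩ := hsrc m hm
      rw [ha, hb, if_neg (by omega : ¬ (k - 1 < k - 1)), if_pos (by omega : 0 < k - 1)]
      have hns : m ≠ (m + k - 1) % k := by
        rcases modc' k (m + k - 1) (by omega) with ⟨hc, hd⟩ | ⟨hc, hd⟩ <;> omega
      rw [if_neg hns, if_pos rfl]
      have hck : (1:ℝ) ≤ (k:ℝ) - ((0:ℕ):ℝ) := by
        push_cast
        have : (3:ℝ) ≤ (k:ℝ) := by exact_mod_cast hk
        linarith
      rw [minmax_eq_one hck]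
      norm_num
    · obtain ⟨hr1, hr2, hr3⟩ := hmid i hi m hm hmi
      set ro := (m + k - i) % k with hro
      rw [hr3, if_pos (by omega : ro - 1 < k - 1)]
      have hcast : ((ro - 1 : ℕ) : ℝ) = (ro : ℝ) - 1 := by
        have : (ro - 1) + 1 = ro := by omega
        have := congrArg (fun n : ℕ => (n : ℝ)) this
        push_cast at this
        linarith
      have hrok : (ro : ℝ) ≤ (k:ℝ) - 1 := by
        have h' : ((ro:ℝ) + 1) ≤ (k:ℝ) := by exact_mod_cast (by omega : ro + 1 ≤ k)
        linarith
      have harg : (k:ℝ) - 1 - ((ro - 1 : ℕ) : ℝ) = (k:ℝ) - (ro : ℝ) := by rw [hcast]; ring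
      rw [harg, minmax_eq_one (by linarith : (1:ℝ) ≤ (k:ℝ) - (ro:ℝ))]
      by_cases hms : m = (i + k - 1) % k
      · have hrk : ro = k - 1 := (hsink i hi m hm).1 hms
        rw [if_neg (by omega : ¬ ro < k - 1), if_pos hms]
        norm_num
      · have hrk : ro ≠ k - 1 := fun h => hms ((hsink i hi m hm).2 h)
        rw [if_pos (by omega : ro < k - 1), if_neg hms, if_neg hmi]
        norm_num
  · -- no storage
    intro i hi m hm hmi hms θ hθ
    rw [integral_flowUnit k i m hi hm, integral_flowUnit k i ((m + k - 1) % k) hi (hmlt m)]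
    obtain ⟨hr1, hr2, hr3⟩ := hmid i hi m hm hmi
    set ro := (m + k - i) % k with hro
    have hrk : ro ≠ k - 1 := fun h => hms ((hsink i hi m hm).2 h)
    rw [hr3, if_pos (by omega : ro - 1 < k - 1), if_pos (by omega : ro < k - 1)]
    have hcast : ((ro - 1 : ℕ) : ℝ) = (ro : ℝ) - 1 := by
      have : (ro - 1) + 1 = ro := by omega
      have := congrArg (fun n : ℕ => (n : ℝ)) this
      push_cast at this
      linarith
    have harg : θ - 1 - ((ro - 1 : ℕ) : ℝ) = θ - (ro : ℝ) := by rw [hcast]; ring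
    rw [harg]
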